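/- (Proposition 1, Policy Improvement with Partial Policy Learning.) Consider a finite Markov decision process: a nonempty finite state space S, a nonempty finite action space A, a transition kernel P assigning to each (s,a) a probability mass function P(·|s,a) on S, a reward function r : S × A → ℝ, and a discount factor γ ∈ [0,1). Let β assign to each state s a probability mass function β(·|s) on A, let V_β : S → ℝ satisfy V_β(s) = ∑_{a} β(a|s) · ( r(s,a) + γ · ∑_{s'} P(s'|s,a) · V_β(s') ) for all s, and define Q_β(s,a) = r(s,a) + γ · ∑_{s'} P(s'|s,a) · V_β(s'). Let π : S → A be a deterministic policy such that for every s ∈ S, π(s) lies in the support of β(·|s) and Q_β(s, π(s)) = max over a in the support of β(·|s) of Q_β(s,a); and let V_π : S → ℝ satisfy V_π(s) = r(s, π(s)) + γ · ∑_{s'} P(s'|s, π(s)) · V_π(s') for all s. Then V_π(s) ≥ V_β(s) for all s ∈ S, and consequently for every initial probability mass function μ₀ on S the performance J(π) = ∑_{s} μ₀(s) · V_π(s) satisfies J(π) ≥ J(β) = ∑_{s} μ₀(s) · V_β(s). -/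

import Mathlib

open scoped Classical

lemma pmf_sum_toReal_eq_one {α : Type*} [Fintype α] (p : PMF α) :
    ∑ a : α, (p a).toReal = 1 := by
  rw [← ENNReal.toReal_sum (fun a _ => (p.apply_lt_top a).ne)]
  rw [← tsum_fintype (L := .unconditional _), p.tsum_coe, ENNReal.toReal_one]

/-- Proposition 1 (Policy Improvement with Partial Policy Learning).
If at every state `s` the deterministic policy `π` picks an action in the
support of `β(·|s)` that maximizes `Q_β(s,·)` over this support, then
`V_π ≥ V_β` pointwise, and consequently `J(π) ≥ J(β)` for every initial
distribution `μ₀`. -/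
theorem partial_policy_learning_improvement {S A : Type*} [Fintype S] [Nonempty S]
    [Fintype A] [Nonempty A] (P : S → A → PMF S) (r : S → A → ℝ)
    (γ : ℝ) (hγ0 : 0 ≤ γ) (hγ1 : γ < 1)
    (β : S → PMF A) (Vβ : S → ℝ)
    (hVβ : ∀ s : S, Vβ s = ∑ a : A, ((β s) a).toReal *
      (r s a + γ * ∑ s' : S, (P s a s').toReal * Vβ s'))
    (Qβ : S → A → ℝ)
    (hQβ : ∀ s a, Qβ s a = r s a + γ * ∑ s' : S, (P s a s').toReal * Vβ s')
    (π : S → A)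
    (hπ_supp : ∀ s : S, π s ∈ (β s).support)
    (hπ_max : ∀ s : S, Qβ s (π s) =
      (Finset.univ.filter fun a : A => (β s) a ≠ 0).sup'
        (by
          obtain ⟨a, ha⟩ := (β s).support_nonempty
          exact ⟨a, Finset.mem_filter.2 ⟨Finset.mem_univ a,
            ((β s).mem_support_iff a).mp ha⟩⟩) (Qβ s))
    (Vπ : S → ℝ)
    (hVπ : ∀ s : S, Vπ s = r s (π s) + γ * ∑ s' : S, (P s (π s) s').toReal * Vπ s') :
    (∀ s : S, Vπ s ≥ Vβ s) ∧
    (∀ μ₀ : PMF S, ∑ s : S, (μ₀ s).toReal * Vπ s ≥ ∑ s : S, (μ₀ s).toReal * Vβ s) := by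
  -- Step 1: Vβ s ≤ Qβ s (π s)
  have hstep : ∀ s : S, Vβ s ≤ Qβ s (π s) := by
    intro s
    have h1 : Vβ s = ∑ a : A, ((β s) a).toReal * Qβ s a := by
      rw [hVβ s]
      exact Finset.sum_congr rfl fun a _ => by rw [hQβ]
    rw [h1]
    calc ∑ a : A, ((β s) a).toReal * Qβ s a
        ≤ ∑ a : A, ((β s) a).toReal * Qβ s (π s) := by
          apply Finset.sum_le_sum
          intro a _
          by_cases ha : (β s) a = 0
          · simp [ha]
          · apply mul_le_mul_of_nonneg_left _ ENNReal.toReal_nonneg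
            rw [hπ_max s]
            exact Finset.le_sup' (Qβ s)
              (Finset.mem_filter.2 ⟨Finset.mem_univ a, ha⟩)
      _ = Qβ s (π s) := by
          rw [← Finset.sum_mul, pmf_sum_toReal_eq_one, one_mul]
  -- Step 2: contraction argument
  set f : S → ℝ := fun s => Vπ s - Vβ s with hf
  obtain ⟨s₀, _, hs₀⟩ := Finset.exists_min_image Finset.univ f Finset.univ_nonempty
  have hmin : ∀ s : S, f s₀ ≤ f s := fun s => hs₀ s (Finset.mem_univ s)
  have key : f s₀ ≥ γ * f s₀ := by
    have h2 : Vπ s₀ - Qβ s₀ (π s₀) = γ * ∑ s' : S, (P s₀ (π s₀) s').toReal * f s' := by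
      rw [hVπ s₀, hQβ s₀ (π s₀)]
      simp only [hf]
      simp only [mul_sub, Finset.sum_sub_distrib]
      ring
    have h3 : γ * f s₀ ≤ γ * ∑ s' : S, (P s₀ (π s₀) s').toReal * f s' := by
      apply mul_le_mul_of_nonneg_left _ hγ0
      calc f s₀ = ∑ s' : S, (P s₀ (π s₀) s').toReal * f s₀ := by
              rw [← Finset.sum_mul, pmf_sum_toReal_eq_one, one_mul]
        _ ≤ ∑ s' : S, (P s₀ (π s₀) s').toReal * f s' := by
              apply Finset.sum_le_sum
              intro s' _
              exact mul_le_mul_of_nonneg_left (hmin s') ENNReal.toReal_nonneg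
    have h4 : Vπ s₀ - Qβ s₀ (π s₀) ≤ f s₀ := by
      simp only [hf]
      linarith [hstep s₀]
    linarith [h2 ▸ h3]
  have hm0 : 0 ≤ f s₀ := by nlinarith
  have hge : ∀ s : S, Vπ s ≥ Vβ s := by
    intro s
    have := hmin s
    simp only [hf] at this hm0 ⊢
    linarith
  refine ⟨hge, fun μ₀ => ?_⟩
  apply Finset.sum_le_sum
  intro s _
  exact mul_le_mul_of_nonneg_left (hge s) ENNReal.toReal_nonneg
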